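/- Let n ≥ 2 and let w_0, ..., w_{n-1} be nonzero real arc weights on the directed cycle on n vertices such that w = Σ_i w_i ≠ 0 and w^{(2)} = Σ_{0 ≤ i < j ≤ n-1} w_i w_j ≠ 0. Let W be the weighted distance matrix. Then W is invertible and W^{-1} = -(1/w)(I - P) + (w / w^{(2)}) β α^T, where P is the cyclic permutation matrix, β_i = w_i/w, and α_i = w_{(i-1) mod n}/w. -/

import Mathlib

open Matrix

open Fin.NatCast

private lemma sq_sum_aux (f : ℕ → ℝ) (N : ℕ) :
    2 * ∑ d ∈ Finset.range N, ∑ m ∈ Finset.range d, f m * f d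
      = (∑ k ∈ Finset.range N, f k)^2 - ∑ k ∈ Finset.range N, f k ^ 2 := by
  induction N with
  | zero => simp
  | succ N ih =>
    rw [Finset.sum_range_succ, Finset.sum_range_succ (f := f),
      Finset.sum_range_succ (f := fun k => f k ^ 2), mul_add, ih, ← Finset.sum_mul]
    ring

private lemma sum_shift {n : ℕ} [NeZero n] (g : Fin n → ℝ) (i : Fin n) :
    ∑ k ∈ Finset.range n, g (i + (k : Fin n)) = ∑ k, g k := by
  rw [← Fin.sum_univ_eq_sum_range (fun k => g (i + (k : Fin n)))]
  simp only [Fin.cast_val_eq_self]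
  exact Fintype.sum_equiv (Equiv.addLeft i) _ _ (fun k => rfl)

private lemma iio_sum {n : ℕ} [NeZero n] (h : Fin n → ℝ) (b : Fin n) :
    ∑ m ∈ Finset.range (b : ℕ), h (m : Fin n) = ∑ a ∈ Finset.Iio b, h a := by
  refine Finset.sum_nbij' (fun m => (m : Fin n)) (fun a => (a : ℕ)) ?_ ?_ ?_ ?_ ?_
  · intro m hm
    simp only [Finset.mem_range] at hm
    simp only [Finset.mem_Iio, Fin.lt_def, Fin.val_cast_of_lt (hm.trans b.isLt)]
    exact hm
  · intro a ha
    simp only [Finset.mem_Iio, Fin.lt_def] at ha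
    simpa using ha
  · intro m hm
    simp only [Finset.mem_range] at hm
    simp [Fin.val_cast_of_lt (hm.trans b.isLt)]
  · intro a ha; exact Fin.cast_val_eq_self a
  · intro m hm; rfl

private lemma tri {n : ℕ} [NeZero n] (w : Fin n → ℝ) :
    ∑ i, ∑ j ∈ Finset.Ioi i, w i * w j
      = ∑ d ∈ Finset.range n, ∑ m ∈ Finset.range d, w (m : Fin n) * w (d : Fin n) := by
  have swap : ∑ i, ∑ j ∈ Finset.Ioi i, w i * w j = ∑ j, ∑ i ∈ Finset.Iio j, w i * w j := by
    rw [show (fun i => ∑ j ∈ Finset.Ioi i, w i * w j)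
        = fun i => ∑ j, if i < j then w i * w j else 0 from ?_]
    · rw [Finset.sum_comm]
      refine Finset.sum_congr rfl fun j _ => ?_
      rw [show (Finset.Iio j) = Finset.filter (fun i => i < j) Finset.univ by ext; simp,
        Finset.sum_filter]
    · funext i
      rw [show (Finset.Ioi i) = Finset.filter (fun j => i < j) Finset.univ by ext; simp,
        Finset.sum_filter]
  rw [swap, ← Fin.sum_univ_eq_sum_range
    (fun d => ∑ m ∈ Finset.range d, w (m : Fin n) * w (d : Fin n))]
  refine Finset.sum_congr rfl fun j _ => ?_
  rw [iio_sum (fun a => w a * w (((j : ℕ) : Fin n))) j]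
  simp [Fin.cast_val_eq_self]

theorem stmt_12 {n : ℕ} [NeZero n] (hn : 2 ≤ n) (w : Fin n → ℝ)
    (hw0 : ∀ i, w i ≠ 0)
    (hw : (∑ i, w i) ≠ 0)
    (hw2 : (∑ i, ∑ j ∈ Finset.Ioi i, w i * w j) ≠ 0)
    (W : Matrix (Fin n) (Fin n) ℝ)
    (hW : W = Matrix.of fun i j => ∑ k ∈ Finset.range ((j - i : Fin n) : ℕ), w (i + (Fin.ofNat n k)))
    (P : Matrix (Fin n) (Fin n) ℝ)
    (hP : P = Matrix.of fun i j => if j = i + 1 then (1 : ℝ) else 0)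
    (α β : Fin n → ℝ)
    (hα : α = fun i => w (i - 1) / (∑ i, w i))
    (hβ : β = fun i => w i / (∑ i, w i)) :
    IsUnit W.det ∧
      W⁻¹ = -((∑ i, w i)⁻¹ • (1 - P)) +
        ((∑ i, w i) / (∑ i, ∑ j ∈ Finset.Ioi i, w i * w j)) • vecMulVec β α := by
  replace hW : W = Matrix.of fun i j => ∑ k ∈ Finset.range ((j - i : Fin n) : ℕ), w (i + (k : Fin n)) := hW
  set s := ∑ i, w i with hs
  set t := ∑ i, ∑ j ∈ Finset.Ioi i, w i * w j with ht
  set Q := ∑ k, w k ^ 2 with hQ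
  have hn0 : 0 < n := by omega
  have hrange_s : ∀ i : Fin n, ∑ k ∈ Finset.range n, w (i + (k : Fin n)) = s :=
    fun i => sum_shift w i
  have hrange_Q : ∀ i : Fin n, ∑ k ∈ Finset.range n, w (i + (k : Fin n)) ^ 2 = Q :=
    fun i => sum_shift (fun k => w k ^ 2) i
  have h2t : 2 * t = s ^ 2 - Q := by
    rw [ht, tri w]
    have hc := sq_sum_aux (fun m => w (m : Fin n)) n
    have c1 : ∑ k ∈ Finset.range n, w (k : Fin n) = s := by
      rw [← Fin.sum_univ_eq_sum_range (fun k => w (k : Fin n))]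
      simp [Fin.cast_val_eq_self, hs]
    have c2 : ∑ k ∈ Finset.range n, w (k : Fin n) ^ 2 = Q := by
      rw [← Fin.sum_univ_eq_sum_range (fun k => w (k : Fin n) ^ 2)]
      simp [Fin.cast_val_eq_self, hQ]
    rw [c1, c2] at hc
    exact hc
  -- row sums against w
  have hrow : ∀ i : Fin n, (∑ k, W i k * w k) = t := by
    intro i
    have e1 : ∑ d : Fin n, W i (i + d) * w (i + d) = ∑ k, W i k * w k :=
      Fintype.sum_equiv (Equiv.addLeft i) _ _ (fun d => rfl)
    rw [← e1]
    have e2 : ∀ d : Fin n, W i (i + d) = ∑ m ∈ Finset.range (d : ℕ), w (i + (m : Fin n)) := by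
      intro d; rw [hW]; simp [add_sub_cancel_left]
    have e3 : ∑ d : Fin n, W i (i + d) * w (i + d)
        = ∑ d ∈ Finset.range n, ∑ m ∈ Finset.range d, w (i + (m : Fin n)) * w (i + (d : Fin n)) := by
      rw [← Fin.sum_univ_eq_sum_range
        (fun d => ∑ m ∈ Finset.range d, w (i + (m : Fin n)) * w (i + (d : Fin n)))]
      refine Finset.sum_congr rfl fun d _ => ?_
      rw [e2 d, Finset.sum_mul]
      simp [Fin.cast_val_eq_self]
    rw [e3]
    have hc := sq_sum_aux (fun m => w (i + (m : Fin n))) n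
    rw [hrange_s i, hrange_Q i] at hc
    linarith
  -- W * P
  have hWP : ∀ i j : Fin n, (W * P) i j = W i (j - 1) := by
    intro i j
    rw [Matrix.mul_apply, Finset.sum_eq_single (j - 1)]
    · rw [hP]; simp [sub_add_cancel]
    · intro k _ hk
      rw [hP]; simp only [Matrix.of_apply]
      rw [if_neg, mul_zero]
      intro h; apply hk; rw [h]; open Fin.CommRing in ring
    · simp
  -- difference of rows
  have hdiff : ∀ i j : Fin n, W i j - W i (j - 1) = w (j - 1) - if j = i then s else 0 := by
    intro i j
    by_cases hji : j = i
    · subst hji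
      have h1 : W j j = 0 := by rw [hW]; simp
      have h2 : W j (j - 1) = s - w (j - 1) := by
        rw [hW]; simp only [Matrix.of_apply]
        have hval : ((j - 1 - j : Fin n) : ℕ) = n - 1 := by
          have e : (j - 1 - j : Fin n) = -1 := by open Fin.CommRing in ring
          rw [e]
          rcases n with _ | m
          · exact absurd rfl (NeZero.ne 0)
          · simp [Fin.coe_neg_one]
        rw [hval]
        have hsplit : ∑ k ∈ Finset.range n, w (j + (k : Fin n))
            = (∑ k ∈ Finset.range (n - 1), w (j + (k : Fin n))) + w (j + ((n - 1 : ℕ) : Fin n)) := by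
          have h := Finset.sum_range_succ (fun k : ℕ => w (j + (k : Fin n))) (n - 1)
          rw [Nat.sub_add_cancel (by omega : 1 ≤ n)] at h
          exact h
        have hlast : j + ((n - 1 : ℕ) : Fin n) = j - 1 := by
          have e : ((n - 1 : ℕ) : Fin n) = -1 := by
            apply Fin.ext
            rcases n with _ | m
            · exact absurd rfl (NeZero.ne 0)
            · simp [Fin.coe_neg_one, Fin.val_cast_of_lt (by omega : m + 1 - 1 < m + 1)]
          rw [e]; open Fin.CommRing in ring
        rw [hlast] at hsplit
        have := hrange_s j
        linarith
      rw [h1, h2]; simp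
    · have hd0 : (j - i : Fin n) ≠ 0 := sub_ne_zero.mpr hji
      set d : ℕ := ((j - i : Fin n) : ℕ) with hd
      have hd1 : 1 ≤ d := by
        rcases Nat.eq_zero_or_pos d with h | h
        · exact absurd (Fin.ext (by simp [← hd, h])) hd0
        · omega
      have hval : ((j - 1 - i : Fin n) : ℕ) = d - 1 := by
        have e : (j - 1 - i : Fin n) = (j - i) - 1 := by open Fin.CommRing in ring
        rw [e]
        rcases n with _ | m
        · exact absurd rfl (NeZero.ne 0)
        · rw [Fin.coe_sub_one, if_neg hd0]
      rw [hW]; simp only [Matrix.of_apply]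
      rw [hval, ← hd]
      have hsplit : ∑ k ∈ Finset.range d, w (i + (k : Fin n))
          = (∑ k ∈ Finset.range (d - 1), w (i + (k : Fin n))) + w (i + ((d - 1 : ℕ) : Fin n)) := by
        conv_lhs => rw [show d = (d - 1) + 1 from by omega]
        rw [Finset.sum_range_succ]
      have hlast : i + ((d - 1 : ℕ) : Fin n) = j - 1 := by
        have h1 : ((d : ℕ) : Fin n) = j - i := Fin.cast_val_eq_self _
        have h2 : ((d - 1 : ℕ) : Fin n) = ((d : ℕ) : Fin n) - 1 := by
          open Fin.CommRing in (push_cast [Nat.cast_sub hd1]; ring)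
        rw [h2, h1]; open Fin.CommRing in ring
      rw [hlast] at hsplit
      rw [hsplit, if_neg hji]
      ring
  -- the right inverse property
  have hmul : W * (-(s⁻¹ • (1 - P)) + (s / t) • vecMulVec β α) = 1 := by
    ext i j
    rw [Matrix.mul_add, Matrix.mul_neg, Matrix.mul_smul, Matrix.mul_smul, Matrix.mul_sub,
      Matrix.mul_one]
    simp only [Matrix.add_apply, Matrix.neg_apply, Matrix.smul_apply, Matrix.sub_apply,
      smul_eq_mul]
    rw [hWP i j]
    have hv : (W * vecMulVec β α) i j = (t / s) * α j := by
      rw [Matrix.mul_apply]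
      simp only [Matrix.vecMulVec_apply, hβ]
      have e : ∀ k : Fin n, W i k * (w k / s * α j) = W i k * w k * (s⁻¹ * α j) := by
        intro k; rw [div_eq_mul_inv]; ring
      rw [Finset.sum_congr rfl (fun k _ => e k), ← Finset.sum_mul, hrow i]
      field_simp
    rw [hv, hdiff i j, hα, Matrix.one_apply]
    by_cases hji : j = i
    · subst hji
      rw [if_pos rfl, if_pos rfl]
      field_simp
      ring
    · rw [if_neg hji, if_neg (fun h => hji h.symm)]
      field_simp
      ring
  exact ⟨Matrix.isUnit_det_of_right_inverse hmul, Matrix.inv_eq_right_inv hmul⟩
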